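/- Let 0 < H₁ ≤ H₂ < 1 and define ψ_H(t) = 4 sin²(πt) · ( ∑_{n=0}^∞ (n+t)^{-(2H+1)} + ∑_{n=0}^∞ (n+1−t)^{-(2H+1)} ) for t ∈ (0,1). Then there exists a constant M > 0 (depending only on H₁ and H₂) such that ψ_{H₁}(t) ≤ M · ψ_{H₂}(t) for all t ∈ (0,1). -/
import Mathlib


/-- The spectral density (up to a normalizing constant) of fractional Gaussian noise of
Hurst index `H`, defined for `t ∈ (0,1)`:
`ψ_H(t) = 4 sin²(πt)·(∑_{n≥0} (n+t)^{-(2H+1)} + ∑_{n≥0} (n+1−t)^{-(2H+1)})`. -/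
noncomputable def psi (H t : ℝ) : ℝ :=
  4 * Real.sin (Real.pi * t) ^ 2 *
    ((∑' n : ℕ, ((n : ℝ) + t) ^ (-(2 * H + 1))) +
      ∑' n : ℕ, ((n : ℝ) + 1 - t) ^ (-(2 * H + 1)))

lemma summable_aux {p s : ℝ} (hp : 1 < p) (hs : 0 < s) (hs1 : s ≤ 1) :
    Summable (fun n : ℕ => ((n : ℝ) + s) ^ (-p)) := by
  have hbase : Summable (fun n : ℕ => ((n : ℝ) + 1) ^ (-p)) := by
    have := (Real.summable_nat_rpow (p := -p)).mpr (by linarith)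
    have h2 := (summable_nat_add_iff 1).mpr this
    refine h2.congr fun n => ?_
    push_cast
    ring_nf
  have := hbase.mul_left (s ^ (-p))
  refine this.of_nonneg_of_le (fun n => Real.rpow_nonneg (by positivity) _) (fun n => ?_)
  have h1 : 0 < s * ((n : ℝ) + 1) := by positivity
  have h2 : s * ((n : ℝ) + 1) ≤ (n : ℝ) + s := by nlinarith [Nat.cast_nonneg (α := ℝ) n]
  calc ((n : ℝ) + s) ^ (-p) ≤ (s * ((n : ℝ) + 1)) ^ (-p) :=
        Real.rpow_le_rpow_of_nonpos h1 h2 (by linarith)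
    _ = s ^ (-p) * ((n : ℝ) + 1) ^ (-p) :=
        Real.mul_rpow hs.le (by positivity)

lemma key {H₁ H₂ s : ℝ} (h1 : 0 < H₁) (h12 : H₁ ≤ H₂) (hs : 0 < s) (hs1 : s < 1) :
    ∑' n : ℕ, ((n : ℝ) + s) ^ (-(2 * H₁ + 1)) ≤
      (1 + ∑' n : ℕ, ((n : ℝ) + 1) ^ (-(2 * H₁ + 1))) *
        ∑' n : ℕ, ((n : ℝ) + s) ^ (-(2 * H₂ + 1)) := by
  set p₁ := 2 * H₁ + 1 with hp₁
  set p₂ := 2 * H₂ + 1 with hp₂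
  have hp1 : 1 < p₁ := by simp [hp₁]; linarith
  have hp2 : 1 < p₂ := by simp [hp₂]; linarith
  have hS1 : Summable (fun n : ℕ => ((n : ℝ) + s) ^ (-p₁)) := summable_aux hp1 hs hs1.le
  have hS2 : Summable (fun n : ℕ => ((n : ℝ) + s) ^ (-p₂)) := summable_aux hp2 hs hs1.le
  have hC : Summable (fun n : ℕ => ((n : ℝ) + 1) ^ (-p₁)) := summable_aux hp1 one_pos le_rfl
  set C := ∑' n : ℕ, ((n : ℝ) + 1) ^ (-p₁) with hCdef
  have hCnn : 0 ≤ C := tsum_nonneg fun n => Real.rpow_nonneg (by positivity) _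
  -- split off first term
  have hsplit : ∑' n : ℕ, ((n : ℝ) + s) ^ (-p₁)
      = (0 + s) ^ (-p₁) + ∑' n : ℕ, (((n : ℕ) + 1 : ℝ) + s) ^ (-p₁) := by
    have := Summable.tsum_eq_zero_add hS1
    simpa using this
  have htail : ∑' n : ℕ, (((n : ℕ) + 1 : ℝ) + s) ^ (-p₁) ≤ C := by
    rw [hCdef]
    refine Summable.tsum_le_tsum (fun n => ?_) ((summable_nat_add_iff 1).mpr hS1 |>.congr fun n => by push_cast; ring_nf) hC
    exact Real.rpow_le_rpow_of_nonpos (by positivity) (by linarith) (by linarith)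
  have hfirst : (0 + s) ^ (-p₁) ≤ s ^ (-p₂) := by
    rw [zero_add]
    exact Real.rpow_le_rpow_of_exponent_ge hs hs1.le (by linarith)
  have hone : (1 : ℝ) ≤ s ^ (-p₂) := by
    have := Real.rpow_le_rpow_of_exponent_ge hs hs1.le (show -p₂ ≤ 0 by linarith)
    simpa using this
  have hS2ge : s ^ (-p₂) ≤ ∑' n : ℕ, ((n : ℝ) + s) ^ (-p₂) := by
    have := Summable.le_tsum hS2 0 (fun j _ => Real.rpow_nonneg (by positivity) _)
    simpa using this
  calc ∑' n : ℕ, ((n : ℝ) + s) ^ (-p₁) ≤ s ^ (-p₂) + C := by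
        rw [hsplit]; exact add_le_add hfirst htail
    _ ≤ (1 + C) * s ^ (-p₂) := by nlinarith
    _ ≤ (1 + C) * ∑' n : ℕ, ((n : ℝ) + s) ^ (-p₂) := by
        apply mul_le_mul_of_nonneg_left hS2ge (by linarith)

/-- For `0 < H₁ ≤ H₂ < 1` there is `M > 0` (depending only on
`H₁, H₂`) with `ψ_{H₁}(t) ≤ M · ψ_{H₂}(t)` for all `t ∈ (0,1)`. -/
theorem stmt7 (H₁ H₂ : ℝ) (h1 : 0 < H₁) (h12 : H₁ ≤ H₂) (h2 : H₂ < 1) :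
    ∃ M > 0, ∀ t ∈ Set.Ioo (0 : ℝ) 1, psi H₁ t ≤ M * psi H₂ t := by
  set C := ∑' n : ℕ, ((n : ℝ) + 1) ^ (-(2 * H₁ + 1)) with hCdef
  have hCnn : 0 ≤ C := tsum_nonneg fun n => Real.rpow_nonneg (by positivity) _
  refine ⟨1 + C, by linarith, fun t ht => ?_⟩
  obtain ⟨ht0, ht1⟩ := ht
  have key1 := key h1 h12 ht0 ht1
  have key2 := key h1 h12 (s := 1 - t) (by linarith) (by linarith)
  have hrw1 : ∀ H : ℝ, (∑' n : ℕ, ((n : ℝ) + 1 - t) ^ (-(2 * H + 1)))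
      = ∑' n : ℕ, ((n : ℝ) + (1 - t)) ^ (-(2 * H + 1)) := fun H => by
    congr 1; ext n; ring_nf
  unfold psi
  rw [hrw1 H₁, hrw1 H₂]
  have hsin : 0 ≤ 4 * Real.sin (Real.pi * t) ^ 2 := by positivity
  have hsum : (∑' n : ℕ, ((n : ℝ) + t) ^ (-(2 * H₁ + 1)))
      + ∑' n : ℕ, ((n : ℝ) + (1 - t)) ^ (-(2 * H₁ + 1))
      ≤ (1 + C) * ((∑' n : ℕ, ((n : ℝ) + t) ^ (-(2 * H₂ + 1)))
        + ∑' n : ℕ, ((n : ℝ) + (1 - t)) ^ (-(2 * H₂ + 1))) := by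
    rw [mul_add]
    exact add_le_add key1 key2
  calc 4 * Real.sin (Real.pi * t) ^ 2 *
        ((∑' n : ℕ, ((n : ℝ) + t) ^ (-(2 * H₁ + 1)))
          + ∑' n : ℕ, ((n : ℝ) + (1 - t)) ^ (-(2 * H₁ + 1)))
      ≤ 4 * Real.sin (Real.pi * t) ^ 2 * ((1 + C) *
        ((∑' n : ℕ, ((n : ℝ) + t) ^ (-(2 * H₂ + 1)))
          + ∑' n : ℕ, ((n : ℝ) + (1 - t)) ^ (-(2 * H₂ + 1)))) :=
        mul_le_mul_of_nonneg_left hsum hsin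
    _ = (1 + C) * (4 * Real.sin (Real.pi * t) ^ 2 *
        ((∑' n : ℕ, ((n : ℝ) + t) ^ (-(2 * H₂ + 1)))
          + ∑' n : ℕ, ((n : ℝ) + (1 - t)) ^ (-(2 * H₂ + 1)))) := by ring
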